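/- Let X : ℝ → ℝ² be a twice continuously differentiable, L-periodic (L > 0) curve with ‖X'(s)‖ = 1 for all s, injective on [0, L), and suppose the normal map Φ(s,t) = X(s) + t·R(X'(s)) is injective on [0, L) × (−r, r) for some r > 0. Let Γ = X(ℝ) denote the trace of the curve and let p ∈ ℝ² satisfy dist(p, Γ) < r. Then there exists a unique point q ∈ Γ with ‖p − q‖ = dist(p, Γ); moreover, for every s with X(s) = q one has ⟨p − q, X'(s)⟩ = 0, i.e. p − q is normal to the curve at q. (Unique nearest-point projection in the tubular neighborhood, used in Appendix A of the paper.) -/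

import Mathlib

/-- Rotation by 90 degrees in the Euclidean plane: `R(a₁, a₂) = (-a₂, a₁)`. -/
noncomputable def rot (a : EuclideanSpace ℝ (Fin 2)) : EuclideanSpace ℝ (Fin 2) :=
  (WithLp.equiv 2 (Fin 2 → ℝ)).symm ![-a 1, a 0]

lemma rot_apply0 (a : EuclideanSpace ℝ (Fin 2)) : rot a 0 = -a 1 := rfl
lemma rot_apply1 (a : EuclideanSpace ℝ (Fin 2)) : rot a 1 = a 0 := rfl

lemma inner_two (v w : EuclideanSpace ℝ (Fin 2)) :
    (inner ℝ v w : ℝ) = v 0 * w 0 + v 1 * w 1 := by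
  simp [PiLp.inner_apply, Fin.sum_univ_two, mul_comm]

lemma norm_rot (a : EuclideanSpace ℝ (Fin 2)) : ‖rot a‖ = ‖a‖ := by
  rw [EuclideanSpace.norm_eq, EuclideanSpace.norm_eq]
  congr 1
  simp [Fin.sum_univ_two, rot_apply0, rot_apply1]
  ring

lemma decomp (a v : EuclideanSpace ℝ (Fin 2)) (ha : ‖a‖ = 1)
    (h : (inner ℝ v a : ℝ) = 0) : v = (inner ℝ v (rot a) : ℝ) • rot a := by
  have hn : a 0 * a 0 + a 1 * a 1 = 1 := by
    have := inner_two a a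
    rw [real_inner_self_eq_norm_sq, ha] at this
    linarith [this.symm]
  rw [inner_two] at h
  have ht : (inner ℝ v (rot a) : ℝ) = v 0 * -(a 1) + v 1 * a 0 := by
    rw [inner_two v (rot a), rot_apply0, rot_apply1]
  ext i
  fin_cases i
  · show v 0 = (inner ℝ v (rot a) : ℝ) * -(a 1)
    rw [ht]; linear_combination a 0 * h - v 0 * hn
  · show v 1 = (inner ℝ v (rot a) : ℝ) * a 0
    rw [ht]; linear_combination a 1 * h - v 1 * hn

/-- Unique nearest-point projection in the tubular neighborhood (Appendix A of
the paper): any point at distance `< r` from the trace `Γ` of a closed simple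
unit-speed `C²` curve with an `r`-tubular neighborhood has a unique nearest
point `q ∈ Γ`, and `p - q` is normal to the curve at `q`. -/
theorem stmt8 (X : ℝ → EuclideanSpace ℝ (Fin 2)) (L : ℝ) (hL : 0 < L)
    (hX : ContDiff ℝ 2 X) (hunit : ∀ s : ℝ, ‖deriv X s‖ = 1)
    (hper : ∀ s : ℝ, X (s + L) = X s)
    (hXinj : Set.InjOn X (Set.Ico 0 L))
    (r : ℝ) (hr : 0 < r)
    (hinj : Set.InjOn (fun p : ℝ × ℝ => X p.1 + p.2 • rot (deriv X p.1))
      (Set.Ico 0 L ×ˢ Set.Ioo (-r) r))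
    (p : EuclideanSpace ℝ (Fin 2))
    (hp : Metric.infDist p (Set.range X) < r) :
    ∃ q : EuclideanSpace ℝ (Fin 2),
      (q ∈ Set.range X ∧ ‖p - q‖ = Metric.infDist p (Set.range X)) ∧
      (∀ q' : EuclideanSpace ℝ (Fin 2),
        q' ∈ Set.range X ∧ ‖p - q'‖ = Metric.infDist p (Set.range X) → q' = q) ∧
      (∀ s : ℝ, X s = q → (inner ℝ (p - q) (deriv X s) : ℝ) = 0) := by
  have hperX : Function.Periodic X L := hper
  -- the derivative exists everywhere
  have hdiff : ∀ t : ℝ, HasDerivAt X (deriv X t) t := fun t =>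
    ((hX.differentiable (by norm_num)) t).hasDerivAt
  -- representatives in [0, L)
  have hrep : ∀ s : ℝ, ∃ s₀ ∈ Set.Ico 0 L, X s₀ = X s ∧ deriv X s₀ = deriv X s := by
    intro s
    have hperD : Function.Periodic (deriv X) L := by
      intro x
      have hfun : (fun y => X (y + L)) = X := funext hper
      calc deriv X (x + L) = deriv (fun y => X (y + L)) x :=
              (deriv_comp_add_const X L x).symm
        _ = deriv X x := by rw [hfun]
    refine ⟨toIcoMod hL 0 s, ?_, ?_, ?_⟩
    · exact toIcoMod_mem_Ico' hL s
    · exact hperX.sub_zsmul_eq _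
    · exact hperD.sub_zsmul_eq _
  -- compactness of the trace
  have hrange : Set.range X = X '' Set.Icc 0 L := by
    apply Set.Subset.antisymm
    · rintro _ ⟨s, rfl⟩
      obtain ⟨s₀, hs₀, hXs₀, -⟩ := hrep s
      exact ⟨s₀, ⟨hs₀.1, hs₀.2.le⟩, hXs₀⟩
    · rintro _ ⟨s, -, rfl⟩; exact Set.mem_range_self s
  have hK : IsCompact (Set.range X) := by
    rw [hrange]; exact isCompact_Icc.image hX.continuous
  obtain ⟨q, hqmem, hqd⟩ := hK.exists_infDist_eq_dist ⟨X 0, Set.mem_range_self 0⟩ p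
  set d := Metric.infDist p (Set.range X) with hd
  have hqn : ‖p - q‖ = d := by rw [hqd, dist_eq_norm]
  have hd0 : 0 ≤ d := Metric.infDist_nonneg
  -- orthogonality at any global minimizer
  have key : ∀ s : ℝ, ‖p - X s‖ = d → (inner ℝ (p - X s) (deriv X s) : ℝ) = 0 := by
    intro s hs
    set g : ℝ → ℝ := fun t => (inner ℝ (p - X t) (p - X t) : ℝ) with hg
    have hgDeriv : ∀ t : ℝ, HasDerivAt g
        ((inner ℝ (p - X t) (-deriv X t) : ℝ) + (inner ℝ (-deriv X t) (p - X t) : ℝ)) t := by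
      intro t
      exact HasDerivAt.inner ℝ ((hdiff t).const_sub p) ((hdiff t).const_sub p)
    have hmin : IsLocalMin g s := by
      apply Filter.Eventually.of_forall
      intro t
      have h1 : d ≤ ‖p - X t‖ := by
        rw [← dist_eq_norm]
        exact Metric.infDist_le_dist_of_mem (Set.mem_range_self t)
      have h2 : ‖p - X s‖ ≤ ‖p - X t‖ := hs ▸ h1
      simp only [hg, real_inner_self_eq_norm_sq]
      exact pow_le_pow_left₀ (norm_nonneg _) h2 2
    have hderiv0 : deriv g s = 0 := hmin.deriv_eq_zero
    have := (hgDeriv s).deriv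
    rw [hderiv0] at this
    have hcomm : (inner ℝ (-deriv X s) (p - X s) : ℝ) = (inner ℝ (p - X s) (-deriv X s) : ℝ) :=
      real_inner_comm _ _
    rw [hcomm, inner_neg_right] at this
    linarith
  -- decomposition at a minimizer
  have hdec : ∀ s : ℝ, s ∈ Set.Ico 0 L → ‖p - X s‖ = d →
      ∃ t : ℝ, t ∈ Set.Ioo (-r) r ∧ X s + t • rot (deriv X s) = p := by
    intro s hsmem hs
    have horth := key s hs
    have hdc := decomp (deriv X s) (p - X s) (hunit s) horth
    refine ⟨(inner ℝ (p - X s) (rot (deriv X s)) : ℝ), ?_, ?_⟩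
    · have habs : |(inner ℝ (p - X s) (rot (deriv X s)) : ℝ)| = d := by
        have : ‖p - X s‖ = ‖(inner ℝ (p - X s) (rot (deriv X s)) : ℝ) • rot (deriv X s)‖ := by
          rw [← hdc]
        rw [norm_smul, norm_rot, hunit, mul_one] at this
        rw [← hs, this]; simp [Real.norm_eq_abs]
      rw [Set.mem_Ioo, ← abs_lt, habs]
      exact hp
    · rw [← hdc]; abel
  -- choose representatives for q
  refine ⟨q, ⟨hqmem, hqn⟩, ?_, ?_⟩
  · rintro q' ⟨hq'mem, hq'n⟩
    obtain ⟨s, hXs⟩ := hqmem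
    obtain ⟨s', hXs'⟩ := hq'mem
    obtain ⟨s₀, hs₀mem, hXs₀, -⟩ := hrep s
    obtain ⟨s₁, hs₁mem, hXs₁, -⟩ := hrep s'
    have h0 : ‖p - X s₀‖ = d := by rw [hXs₀, hXs, hqn]
    have h1 : ‖p - X s₁‖ = d := by rw [hXs₁, hXs', hq'n]
    obtain ⟨t₀, ht₀mem, ht₀⟩ := hdec s₀ hs₀mem h0
    obtain ⟨t₁, ht₁mem, ht₁⟩ := hdec s₁ hs₁mem h1
    have heq : (fun p : ℝ × ℝ => X p.1 + p.2 • rot (deriv X p.1)) (s₀, t₀) =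
        (fun p : ℝ × ℝ => X p.1 + p.2 • rot (deriv X p.1)) (s₁, t₁) := by
      simp only
      rw [ht₀, ht₁]
    have := hinj (Set.mk_mem_prod hs₀mem ht₀mem) (Set.mk_mem_prod hs₁mem ht₁mem) heq
    have hss : s₀ = s₁ := congrArg Prod.fst this
    rw [← hXs, ← hXs₀, ← hXs', ← hXs₁, hss]
  · intro s hXsq
    have : ‖p - X s‖ = d := by rw [hXsq, hqn]
    have h := key s this
    rwa [hXsq] at h
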